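/- Let (H, d) be a metric space, F: H → ℝ ∪ {+∞} lower semicontinuous, nonnegative, with the property that every φ ∈ H with F(φ) = 0 lies in a single G-orbit O (for an isometric G-action), and suppose every sequence u_i with d(0, u_i) = 1 and F(u_i) → 0 has a d-convergent subsequence. If there exist φ_i with F(φ_i)/d(0, φ_i) → 0 and d(0, σ·φ_i) → ∞ for all σ ∈ G, then, applying the geodesic convexity slope argument, one obtains a point u with F(u) = 0 and d_G(0, u) = 1, contradicting 0 ∈ O and transitivity; hence F(φ) ≥ C·d_G(0, φ) − D for some constants C, D > 0. -/

import Mathlib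

open Filter

/-- Abstract skeleton of "existence implies properness": if `F ≥ 0` is lower
semicontinuous, convex along geodesics, invariant under an isometric `G`-action,
vanishes exactly on the `G`-orbit of the base point `z` with `F z = 0`, and
sequences at distance 1 from `z` with `F → 0` subconverge, then `F` is coercive
with respect to the relative distance `d_G(z, ·) = inf_σ d(z, σ·φ)`. -/
theorem stmt_9 {H : Type*} [MetricSpace H] {G : Type*} [Group G] [MulAction G H]
    (hisom : ∀ (σ : G) (x y : H), dist (σ • x) (σ • y) = dist x y)
    (geod : H → H → ℝ → H)
    (hg0 : ∀ x y, geod x y 0 = x) (hg1 : ∀ x y, geod x y 1 = y)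
    (hspeed : ∀ x y, ∀ s ∈ Set.Icc (0:ℝ) 1, ∀ t ∈ Set.Icc (0:ℝ) 1,
      dist (geod x y s) (geod x y t) = |s - t| * dist x y)
    (F : H → ℝ)
    (hconv : ∀ x y, ConvexOn ℝ (Set.Icc (0:ℝ) 1) (fun t => F (geod x y t)))
    (hlsc : LowerSemicontinuous F)
    (hnn : ∀ φ, 0 ≤ F φ)
    (hGinv : ∀ (σ : G) (φ : H), F (σ • φ) = F φ)
    (z : H) (hz : F z = 0)
    (hzero : ∀ φ : H, F φ = 0 → ∃ σ : G, φ = σ • z)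
    (hcpt : ∀ u : ℕ → H, (∀ i, dist z (u i) = 1) →
      Tendsto (fun i => F (u i)) atTop (nhds 0) →
      ∃ (v : H) (ψ : ℕ → ℕ), StrictMono ψ ∧
        Tendsto (fun i => dist (u (ψ i)) v) atTop (nhds 0)) :
    ∃ C > (0:ℝ), ∃ D > (0:ℝ), ∀ φ : H,
      C * (⨅ σ : G, dist z (σ • φ)) - D ≤ F φ := by
  by_contra hcon
  push_neg at hcon
  have hGne : Nonempty G := ⟨1⟩
  set dG : H → ℝ := fun φ => ⨅ σ : G, dist z (σ • φ) with hdGdef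
  have hbdd : ∀ φ : H, BddBelow (Set.range fun σ : G => dist z (σ • φ)) := by
    intro φ; exact ⟨0, by rintro x ⟨σ, rfl⟩; exact dist_nonneg⟩
  have hdGnn : ∀ φ, 0 ≤ dG φ := fun φ => le_ciInf fun σ => dist_nonneg
  have hdGle : ∀ (φ : H) (σ : G), dG φ ≤ dist z (σ • φ) := fun φ σ => ciInf_le (hbdd φ) σ
  have hdGinv : ∀ (σ : G) (φ : H), dG (σ • φ) = dG φ := by
    have h1 : ∀ (σ : G) (φ : H), dG (σ • φ) ≤ dG φ := by
      intro σ φ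
      refine le_ciInf fun ρ => ?_
      have h := hdGle (σ • φ) (ρ * σ⁻¹)
      simpa [smul_smul, mul_assoc] using h
    intro σ φ
    refine le_antisymm (h1 σ φ) ?_
    have h := h1 σ⁻¹ (σ • φ)
    simpa using h
  have htri : ∀ (a b : H), dG b ≤ dG a + dist a b := by
    intro a b
    have h5 : ∀ σ : G, dG b - dist a b ≤ dist z (σ • a) := by
      intro σ
      have h2 : dG b ≤ dist z (σ • b) := hdGle b σ
      have h3 : dist z (σ • b) ≤ dist z (σ • a) + dist (σ • a) (σ • b) := dist_triangle _ _ _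
      rw [hisom] at h3
      linarith
    have h4 : dG b - dist a b ≤ dG a := le_ciInf h5
    linarith
  have hc : ∀ i : ℕ, (0:ℝ) < 1/(i+1) := fun i => by positivity
  have key : ∀ i : ℕ, ∃ φ : H, F φ < (1/(i+1:ℝ)) * dG φ - 1/(i+1:ℝ) :=
    fun i => hcon (1/(i+1)) (hc i) (1/(i+1)) (hc i)
  choose φ0 hφ0 using key
  have hdGbig : ∀ i, 1 < dG (φ0 i) := by
    intro i
    have h := hφ0 i
    have hF := hnn (φ0 i)
    have h1 : (1/(i+1:ℝ)) * 1 < (1/(i+1:ℝ)) * dG (φ0 i) := by linarith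
    exact lt_of_mul_lt_mul_left h1 (hc i).le
  have hexσ : ∀ i : ℕ, ∃ σ : G, dist z (σ • φ0 i) < dG (φ0 i) + 1/(i+1:ℝ) := by
    intro i
    have hlt : dG (φ0 i) < dG (φ0 i) + 1/(i+1:ℝ) := by linarith [hc i]
    exact exists_lt_of_ciInf_lt hlt
  choose σ0 hσ0 using hexσ
  set ψp : ℕ → H := fun i => σ0 i • φ0 i with hψp
  set R : ℕ → ℝ := fun i => dist z (ψp i) with hRdef
  have hdGψ : ∀ i, dG (ψp i) = dG (φ0 i) := fun i => hdGinv _ _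
  have hRlt : ∀ i, R i < dG (φ0 i) + 1/(i+1:ℝ) := fun i => hσ0 i
  have hdGleR : ∀ i, dG (φ0 i) ≤ R i := by
    intro i
    have h := hdGle (ψp i) 1
    rw [one_smul] at h
    rw [hdGψ i] at h
    exact h
  have hR1 : ∀ i, 1 < R i := fun i => lt_of_lt_of_le (hdGbig i) (hdGleR i)
  have hRpos : ∀ i, 0 < R i := fun i => lt_trans one_pos (hR1 i)
  have hmem : ∀ i, 1 / R i ∈ Set.Icc (0:ℝ) 1 := by
    intro i
    constructor
    · exact (one_div_pos.mpr (hRpos i)).le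
    · rw [div_le_one (hRpos i)]; exact (hR1 i).le
  have hmem0 : (0:ℝ) ∈ Set.Icc (0:ℝ) 1 := by norm_num
  have hmem1 : (1:ℝ) ∈ Set.Icc (0:ℝ) 1 := by norm_num
  set u : ℕ → H := fun i => geod z (ψp i) (1 / R i) with hu
  have hdist1 : ∀ i, dist z (u i) = 1 := by
    intro i
    have h := hspeed z (ψp i) 0 hmem0 (1/R i) (hmem i)
    rw [hg0] at h
    have habs : |0 - 1/R i| = 1 / R i := by
      rw [zero_sub, abs_neg, abs_of_pos (one_div_pos.mpr (hRpos i))]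
    have hRne : R i ≠ 0 := (hRpos i).ne'
    calc dist z (u i) = |0 - 1/R i| * dist z (ψp i) := h
      _ = (1/R i) * R i := by rw [habs]
      _ = 1 := by field_simp
  have hFψ : ∀ i, F (ψp i) = F (φ0 i) := fun i => hGinv _ _
  have hFu_le : ∀ i, F (u i) ≤ (1 / R i) * F (φ0 i) := by
    intro i
    have hcv := (hconv z (ψp i)).2 hmem0 hmem1
      (show (0:ℝ) ≤ 1 - 1/R i by linarith [(hmem i).2])
      (show (0:ℝ) ≤ 1/R i from (one_div_pos.mpr (hRpos i)).le)
      (show (1 - 1/R i) + 1/R i = 1 by ring)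
    simp only [smul_eq_mul, mul_zero, mul_one, zero_add, hg0, hg1] at hcv
    rw [hz, hFψ i] at hcv
    calc F (u i) = F (geod z (ψp i) (1/R i)) := rfl
      _ ≤ (1 - 1/R i) * 0 + 1/R i * F (φ0 i) := hcv
      _ = 1/R i * F (φ0 i) := by ring
  have hFu_lt : ∀ i, F (u i) ≤ 1/(i+1:ℝ) := by
    intro i
    have h1 := hFu_le i
    have h2 : F (φ0 i) < (1/(i+1:ℝ)) * dG (φ0 i) := by linarith [hφ0 i, hc i]
    have hdpos : 0 < dG (φ0 i) := by linarith [hdGbig i]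
    have h3 : (1/R i) * F (φ0 i) ≤ (1 / dG (φ0 i)) * F (φ0 i) := by
      apply mul_le_mul_of_nonneg_right _ (hnn _)
      exact one_div_le_one_div_of_le hdpos (hdGleR i)
    have h4 : (1 / dG (φ0 i)) * F (φ0 i) < (1 / dG (φ0 i)) * ((1/(i+1:ℝ)) * dG (φ0 i)) :=
      mul_lt_mul_of_pos_left h2 (one_div_pos.mpr hdpos)
    have h5 : (1 / dG (φ0 i)) * ((1/(i+1:ℝ)) * dG (φ0 i)) = 1/(i+1:ℝ) := by
      field_simp
    linarith
  have hFu0 : Tendsto (fun i => F (u i)) atTop (nhds 0) :=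
    squeeze_zero (fun i => hnn (u i)) hFu_lt tendsto_one_div_add_atTop_nhds_zero_nat
  obtain ⟨v, s, hs, hconvd⟩ := hcpt u hdist1 hFu0
  have hFs : Tendsto (fun i => F (u (s i))) atTop (nhds 0) := hFu0.comp hs.tendsto_atTop
  have hFv : F v = 0 := by
    by_contra hne
    have hpos : 0 < F v := lt_of_le_of_ne (hnn v) (Ne.symm hne)
    have hev := hlsc v (F v / 2) (by linarith)
    have htend : Tendsto (fun i => u (s i)) atTop (nhds v) :=
      tendsto_iff_dist_tendsto_zero.mpr hconvd
    have hev2 := htend.eventually hev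
    have hev3 : ∀ᶠ i in atTop, F (u (s i)) < F v / 2 :=
      hFs.eventually_lt_const (by linarith)
    obtain ⟨i, h1, h2⟩ := (hev2.and hev3).exists
    linarith
  obtain ⟨τ, hτ⟩ := hzero v hFv
  have hdGv : dG v ≤ 0 := by
    subst hτ
    simpa using hdGle (τ • z) τ⁻¹
  have hdistuψ : ∀ i, dist (u i) (ψp i) = R i - 1 := by
    intro i
    have h := hspeed z (ψp i) (1/R i) (hmem i) 1 hmem1
    rw [hg1] at h
    have habs : |1/R i - 1| = 1 - 1/R i := by
      rw [abs_of_nonpos (by linarith [(hmem i).2])]; ring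
    have hRne : R i ≠ 0 := (hRpos i).ne'
    calc dist (u i) (ψp i) = |1/R i - 1| * dist z (ψp i) := h
      _ = (1 - 1/R i) * R i := by rw [habs]
      _ = R i - 1 := by field_simp
  have hdGu : ∀ i : ℕ, 1 - 1/((i:ℝ)+1) ≤ dG (u i) := by
    intro i
    have h1 := htri (u i) (ψp i)
    have h2 := hRlt i
    have h3 := hdistuψ i
    have h4 := hdGψ i
    linarith
  have hfin : ∀ i, 1 - 1/((s i : ℝ)+1) ≤ dist (u (s i)) v := by
    intro i
    have h1 := htri v (u (s i))
    have h2 := hdGu (s i)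
    rw [dist_comm v (u (s i))] at h1
    linarith [hdGv, hdGnn v]
  have htend1 : Tendsto (fun i => 1 - 1/((s i : ℝ)+1)) atTop (nhds 1) := by
    have h := (tendsto_one_div_add_atTop_nhds_zero_nat (𝕜 := ℝ)).comp hs.tendsto_atTop
    have := tendsto_const_nhds (x := (1:ℝ)) (f := atTop (α := ℕ)) |>.sub h
    simpa using this
  have : (1:ℝ) ≤ 0 := le_of_tendsto_of_tendsto' htend1 hconvd hfin
  linarith
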